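/- Let n, b be positive integers and let B ⊆ A ⊆ 𝔽₂^{[n]×[b]} be nonempty affine subspaces with codim(B) = codim(A) + 1 and âcl(B) = âcl(A) + 1. Let T ⊆ [n] be a closure of A (a deviolator of minimum cardinality) and let y ∈ 𝔽₂^{T×[b]} satisfy A ∩ C_y ≠ ∅. Then B ∩ C_y ≠ ∅, the affine subspaces A_y = {x̃ ∈ 𝔽₂^{([n]∖T)×[b]} : the point equal to y on the blocks of T and to x̃ elsewhere lies in A} and B_y (defined analogously from B) are both safe, and codim(B_y) = codim(A_y) + 1, where codimensions of A_y and B_y are taken within 𝔽₂^{([n]∖T)×[b]}. -/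

import Mathlib

open Finset

noncomputable section

abbrev F2 : Type := ZMod 2

/-- Restriction of `x` to block `i`. -/
def blk {ι : Type*} {b : ℕ} (x : (ι × Fin b) → F2) (i : ι) : Fin b → F2 := fun j => x (i, j)

/-- The lifted gadget map `G(x)_i = g(x(i))`. -/
def liftG {n b : ℕ} (g : (Fin b → F2) → F2) (x : (Fin n × Fin b) → F2) : Fin n → F2 :=
  fun i => g (blk x i)

/-- Fourier coefficient of `h : 𝔽₂^J → 𝔽₂` at `T ⊆ J`. -/
def hatFC {J : Type*} [Fintype J] [DecidableEq J] (h : (J → F2) → F2) (T : Finset J) : ℝ :=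
  ((2 : ℝ) ^ (Fintype.card J))⁻¹ *
    ∑ x : J → F2, (-1 : ℝ) ^ ((h x).val + ∑ j ∈ T, (x j).val)

/-- A set of vectors of the lifted space (blocks indexed by `ι`) is safe if any `k`
linearly independent vectors in its span have supports meeting at least `k` blocks. -/
def IsSafeSet {ι : Type*} {b : ℕ} (Vs : Set ((ι × Fin b) → F2)) : Prop :=
  ∀ (k : ℕ) (w : Fin k → ((ι × Fin b) → F2)),
    (∀ m, w m ∈ Submodule.span F2 Vs) → LinearIndependent F2 w →
    k ≤ ({i : ι | ∃ m j, w m (i, j) ≠ 0} : Set ι).ncard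

/-- The annihilator `L(A)` of an affine subspace: all linear forms vanishing on its
direction. -/
def annih {ι : Type*} [Fintype ι] {b : ℕ}
    (A : AffineSubspace F2 ((ι × Fin b) → F2)) : Set ((ι × Fin b) → F2) :=
  {l | ∀ w ∈ A.direction, ∑ p : ι × Fin b, l p * w p = 0}

/-- A (nonempty) affine subspace is safe if its annihilator is safe. -/
def IsSafeAffine {ι : Type*} [Fintype ι] {b : ℕ}
    (A : AffineSubspace F2 ((ι × Fin b) → F2)) : Prop :=
  IsSafeSet (annih A)

/-- Codimension of an affine subspace of the lifted space. -/
def codim {ι : Type*} [Fintype ι] {b : ℕ}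
    (A : AffineSubspace F2 ((ι × Fin b) → F2)) : ℕ :=
  Fintype.card ι * b - Module.finrank F2 A.direction

/-- Standard basis vector at coordinate `p`. -/
def stdv {ι : Type*} [DecidableEq ι] {b : ℕ} (p : ι × Fin b) : (ι × Fin b) → F2 :=
  fun q => if q = p then 1 else 0

/-- A set of blocks `S` is acceptable for a subspace `W` if one can pick one coordinate
in each block of `S` so that no nonzero 𝔽₂-linear combination of the corresponding
standard basis vectors lies in `W`. -/
def AcceptableFor {ι : Type*} [DecidableEq ι] {b : ℕ}
    (W : Submodule F2 ((ι × Fin b) → F2)) (S : Finset ι) : Prop :=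
  ∃ c : ι → Fin b, ∀ T ⊆ S, T.Nonempty → (∑ s ∈ T, stdv (s, c s)) ∉ W

/-- `âcl(A)`: the maximum size of a set of blocks acceptable for the direction of `A`. -/
def acl {ι : Type*} [Fintype ι] [DecidableEq ι] {b : ℕ}
    (A : AffineSubspace F2 ((ι × Fin b) → F2)) : ℕ :=
  sSup {k | ∃ S : Finset ι, S.card = k ∧ AcceptableFor A.direction S}

/-- `v[∖T]`: restriction of `v` to the coordinates of blocks outside `T`. -/
def restrictOut {n b : ℕ} (T : Finset (Fin n)) (v : (Fin n × Fin b) → F2) :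
    ({i : Fin n // i ∉ T} × Fin b) → F2 :=
  fun p => v (p.1.1, p.2)

/-- `T` is a deviolator for `A` if `{ℓ[∖T] : ℓ ∈ L(A)}` is safe. -/
def IsDeviolator {n b : ℕ} (A : AffineSubspace F2 ((Fin n × Fin b) → F2))
    (T : Finset (Fin n)) : Prop :=
  IsSafeSet (restrictOut T '' annih A)

/-- A closure of `A` is a deviolator of minimum cardinality. -/
def IsClosure {n b : ℕ} (A : AffineSubspace F2 ((Fin n × Fin b) → F2))
    (T : Finset (Fin n)) : Prop :=
  IsDeviolator A T ∧ ∀ T', IsDeviolator A T' → T.card ≤ T'.card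

/-- `C_y`: the set of points agreeing with `y` on all coordinates of blocks in `T`. -/
def cube {n b : ℕ} (T : Finset (Fin n)) (y : ({i : Fin n // i ∈ T} × Fin b) → F2) :
    Set ((Fin n × Fin b) → F2) :=
  {x | ∀ (i : Fin n) (hi : i ∈ T) (j : Fin b), x (i, j) = y (⟨i, hi⟩, j)}

/-- The point of the lifted space equal to `y` on the blocks of `T` and to `x` elsewhere. -/
def glue {n b : ℕ} (T : Finset (Fin n)) (y : ({i : Fin n // i ∈ T} × Fin b) → F2)
    (x : ({i : Fin n // i ∉ T} × Fin b) → F2) : (Fin n × Fin b) → F2 :=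
  fun p => if h : p.1 ∈ T then y (⟨p.1, h⟩, p.2) else x (⟨p.1, h⟩, p.2)

set_option linter.unusedSectionVars false
open Module Submodule

section Dot
variable {P : Type*} [Fintype P] [DecidableEq P]

def dot (l w : P → F2) : F2 := ∑ p, l p * w p

lemma dot_comm (l w : P → F2) : dot l w = dot w l := by
  unfold dot; exact Finset.sum_congr rfl fun p _ => mul_comm _ _

lemma dot_single (l : P → F2) (p : P) : dot l (Pi.single p 1) = l p := by
  unfold dot
  simp [Pi.single_apply, mul_ite]

def dotL : (P → F2) →ₗ[F2] Module.Dual F2 (P → F2) where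
  toFun l :=
    { toFun := fun w => dot l w
      map_add' := fun w w' => by
        unfold dot; rw [← Finset.sum_add_distrib]
        exact Finset.sum_congr rfl fun p _ => by simp [mul_add]
      map_smul' := fun c w => by
        unfold dot; simp only [RingHom.id_apply, Finset.smul_sum]
        exact Finset.sum_congr rfl fun p _ => by simp [Pi.smul_apply, smul_eq_mul]; ring }
  map_add' l l' := by
    refine LinearMap.ext fun w => ?_; simp only [LinearMap.coe_mk, AddHom.coe_mk, LinearMap.add_apply]
    unfold dot; rw [← Finset.sum_add_distrib]
    exact Finset.sum_congr rfl fun p _ => by simp [add_mul]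
  map_smul' c l := by
    refine LinearMap.ext fun w => ?_; simp only [LinearMap.coe_mk, AddHom.coe_mk, RingHom.id_apply, LinearMap.smul_apply]
    unfold dot; simp only [smul_eq_mul, Finset.mul_sum]
    exact Finset.sum_congr rfl fun p _ => by simp [Pi.smul_apply, smul_eq_mul]; ring

lemma dotL_apply (l w : P → F2) : dotL l w = dot l w := rfl

lemma dotL_injective : Function.Injective (dotL (P := P)) := by
  rw [← LinearMap.ker_eq_bot]
  ext l
  simp only [LinearMap.mem_ker, Submodule.mem_bot]
  constructor
  · intro h
    funext p
    have := congrArg (fun f => f (Pi.single p 1)) h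
    simpa [dotL_apply, dot_single] using this
  · rintro rfl; ext w; simp [dotL_apply, dot]

def perp (U : Submodule F2 (P → F2)) : Submodule F2 (P → F2) where
  carrier := {l | ∀ w ∈ U, dot l w = 0}
  add_mem' := by
    intro a b ha hb w hw
    have : dot (a + b) w = dot a w + dot b w := by
      unfold dot; rw [← Finset.sum_add_distrib]
      exact Finset.sum_congr rfl fun p _ => by simp [add_mul]
    rw [this, ha w hw, hb w hw, add_zero]
  zero_mem' := by intro w hw; simp [dot]
  smul_mem' := by
    intro c a ha w hw
    have : dot (c • a) w = c * dot a w := by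
      unfold dot; rw [Finset.mul_sum]
      exact Finset.sum_congr rfl fun p _ => by simp [Pi.smul_apply, smul_eq_mul]; ring
    rw [this, ha w hw, mul_zero]

lemma mem_perp {U : Submodule F2 (P → F2)} {l : P → F2} :
    l ∈ perp U ↔ ∀ w ∈ U, dot l w = 0 := Iff.rfl

lemma perp_antitone {U U' : Submodule F2 (P → F2)} (h : U ≤ U') : perp U' ≤ perp U :=
  fun _ hl w hw => hl w (h hw)

lemma le_perp_perp (U : Submodule F2 (P → F2)) : U ≤ perp (perp U) := by
  intro w hw l hl
  rw [dot_comm]; exact hl w hw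

lemma finrank_perp_add (U : Submodule F2 (P → F2)) :
    finrank F2 (perp U) + finrank F2 U = Fintype.card P := by
  classical
  let Φ : (P → F2) →ₗ[F2] Module.Dual F2 U := U.dualRestrict.comp dotL
  have hsurj : Function.Surjective Φ := by
    have h2 : Function.Surjective (dotL (P := P)) := by
      rw [← LinearMap.range_eq_top]
      apply Submodule.eq_top_of_finrank_eq
      rw [LinearMap.finrank_range_of_inj dotL_injective, Subspace.dual_finrank_eq]
    have h1 : Function.Surjective (U.dualRestrict) := Subspace.dualRestrict_surjective
    rw [LinearMap.coe_comp]
    exact h1.comp h2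
  have hker : LinearMap.ker Φ = perp U := by
    ext l
    simp only [LinearMap.mem_ker, mem_perp]
    constructor
    · intro h w hw
      have := congrArg (fun f => f ⟨w, hw⟩) h
      simpa [Φ, Submodule.dualRestrict_apply, dotL_apply] using this
    · intro h
      ext ⟨w, hw⟩
      simpa [Φ, Submodule.dualRestrict_apply, dotL_apply] using h w hw
  have := LinearMap.finrank_range_add_finrank_ker Φ
  rw [LinearMap.range_eq_top.mpr hsurj, hker] at this
  have hdual : finrank F2 (⊤ : Submodule F2 (Module.Dual F2 U)) = finrank F2 U := by
    rw [finrank_top, Subspace.dual_finrank_eq]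
  have hcard : finrank F2 (P → F2) = Fintype.card P := by
    simp [Module.finrank_pi]
  omega

lemma perp_perp (U : Submodule F2 (P → F2)) : perp (perp U) = U := by
  have h1 := finrank_perp_add U
  have h2 := finrank_perp_add (perp U)
  exact (Submodule.eq_of_le_of_finrank_le (le_perp_perp U) (by omega)).symm

end Dot
section Coord
variable {P : Type*} [Fintype P] [DecidableEq P]

def coordSub (s : Finset P) : Submodule F2 (P → F2) where
  carrier := {v | ∀ p ∉ s, v p = 0}
  add_mem' := by intro a b ha hb p hp; simp [ha p hp, hb p hp]
  zero_mem' := by intro p _; rfl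
  smul_mem' := by intro c a ha p hp; simp [Pi.smul_apply, ha p hp]

lemma mem_coordSub {s : Finset P} {v : P → F2} :
    v ∈ coordSub s ↔ ∀ p ∉ s, v p = 0 := Iff.rfl

lemma coordSub_mono {s t : Finset P} (h : s ⊆ t) : coordSub s ≤ coordSub t :=
  fun v hv p hp => hv p (fun hs => hp (h hs))

lemma coordSub_univ : coordSub (Finset.univ : Finset P) = ⊤ := by
  ext v; simp [mem_coordSub]

lemma coordSub_empty : coordSub (∅ : Finset P) = ⊥ := by
  ext v
  simp only [mem_coordSub, Submodule.mem_bot]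
  constructor
  · intro h; funext p; exact h p (by simp)
  · rintro rfl p _; rfl

lemma single_mem_coordSub {s : Finset P} {p : P} (hp : p ∈ s) :
    Pi.single p (1 : F2) ∈ coordSub s := by
  intro q hq
  have : q ≠ p := fun h => hq (h ▸ hp)
  simp [Pi.single_apply, this]

noncomputable def coordSubEquiv (s : Finset P) :
    coordSub s ≃ₗ[F2] ({p : P // p ∈ s} → F2) where
  toFun v := fun p => v.1 p.1
  map_add' := by intro a b; rfl
  map_smul' := by intro c a; rfl
  invFun x := ⟨fun p => if h : p ∈ s then x ⟨p, h⟩ else 0, by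
    intro p hp; simp [hp]⟩
  left_inv := by
    rintro ⟨v, hv⟩
    ext p
    by_cases h : p ∈ s
    · simp [h]
    · simp [h, hv p h]
  right_inv := by
    intro x; funext p; simp [p.2]

lemma finrank_coordSub (s : Finset P) :
    finrank F2 (coordSub s) = s.card := by
  rw [LinearEquiv.finrank_eq (coordSubEquiv s), Module.finrank_pi]
  simp

lemma perp_inf_coordSub (U : Submodule F2 (P → F2)) (s : Finset P) :
    perp U ⊓ coordSub s = perp (U ⊔ coordSub sᶜ) := by
  ext l
  simp only [Submodule.mem_inf, mem_perp, mem_coordSub]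
  constructor
  · rintro ⟨hU, hs⟩ w hw
    rcases Submodule.mem_sup.mp hw with ⟨u, hu, v, hv, rfl⟩
    have hv0 : dot l v = 0 := by
      unfold dot
      apply Finset.sum_eq_zero
      intro p _
      by_cases h : p ∈ s
      · rw [hv p (by simpa using h), mul_zero]
      · rw [hs p h, zero_mul]
    have : dot l (u + v) = dot l u + dot l v := by
      unfold dot; rw [← Finset.sum_add_distrib]
      exact Finset.sum_congr rfl fun p _ => by simp [mul_add]
    rw [this, hU u hu, hv0, add_zero]
  · intro h
    refine ⟨fun w hw => h w (Submodule.mem_sup_left hw), fun p hp => ?_⟩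
    have := h (Pi.single p 1) (Submodule.mem_sup_right (single_mem_coordSub (by simpa using hp)))
    rwa [dot_single] at this

end Coord

section Blocks
variable {ι : Type*} [Fintype ι] [DecidableEq ι] {b : ℕ}

def blkS (X : Finset ι) : Submodule F2 ((ι × Fin b) → F2) :=
  coordSub (X ×ˢ Finset.univ)

lemma mem_blkS {X : Finset ι} {v : (ι × Fin b) → F2} :
    v ∈ blkS X ↔ ∀ p : ι × Fin b, p.1 ∉ X → v p = 0 := by
  unfold blkS
  rw [mem_coordSub]
  constructor
  · intro h p hp; exact h p (by simp [Finset.mem_product, hp])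
  · intro h p hp; exact h p (by simpa [Finset.mem_product] using hp)

lemma blkS_mono {X Y : Finset ι} (h : X ⊆ Y) : blkS (b := b) X ≤ blkS Y :=
  coordSub_mono (by intro p hp; simp only [Finset.mem_product] at *; exact ⟨h hp.1, hp.2⟩)

lemma blkS_univ : blkS (b := b) (Finset.univ : Finset ι) = ⊤ := by
  unfold blkS
  rw [show (Finset.univ : Finset ι) ×ˢ (Finset.univ : Finset (Fin b)) = Finset.univ from by
    ext p; simp [Finset.mem_product]]
  exact coordSub_univ

lemma blkS_empty : blkS (b := b) (∅ : Finset ι) = ⊥ := by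
  unfold blkS
  rw [show (∅ : Finset ι) ×ˢ (Finset.univ : Finset (Fin b)) = ∅ from by simp]
  exact coordSub_empty

lemma finrank_blkS (X : Finset ι) : finrank F2 (blkS (b := b) X) = X.card * b := by
  rw [blkS, finrank_coordSub, Finset.card_product, Finset.card_univ, Fintype.card_fin]

lemma prod_compl (X : Finset ι) :
    (X ×ˢ (Finset.univ : Finset (Fin b)))ᶜ = Xᶜ ×ˢ Finset.univ := by
  ext p; simp [Finset.mem_product]

def kdim (U : Submodule F2 ((ι × Fin b) → F2)) (X : Finset ι) : ℕ :=
  finrank F2 ↥(U ⊓ blkS X)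

noncomputable def phiZ (U : Submodule F2 ((ι × Fin b) → F2)) (X : Finset ι) : ℤ :=
  (kdim U X : ℤ) + X.card - X.card * b

lemma kdim_univ (U : Submodule F2 ((ι × Fin b) → F2)) :
    kdim U Finset.univ = finrank F2 U := by
  rw [kdim, blkS_univ, inf_top_eq]

lemma kdim_empty (U : Submodule F2 ((ι × Fin b) → F2)) :
    kdim U ∅ = 0 := by
  rw [kdim, blkS_empty, inf_bot_eq, finrank_bot]

lemma kdim_mono_left {U U' : Submodule F2 ((ι × Fin b) → F2)} (h : U ≤ U') (X : Finset ι) :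
    kdim U X ≤ kdim U' X := by
  unfold kdim; exact Submodule.finrank_mono (inf_le_inf_right _ h)

lemma kdim_mono_right (U : Submodule F2 ((ι × Fin b) → F2)) {X Y : Finset ι} (h : X ⊆ Y) :
    kdim U X ≤ kdim U Y := by
  unfold kdim; exact Submodule.finrank_mono (inf_le_inf_left _ (blkS_mono h))

lemma kdim_supermod (U : Submodule F2 ((ι × Fin b) → F2)) (X Y : Finset ι) :
    kdim U X + kdim U Y ≤ kdim U (X ∪ Y) + kdim U (X ∩ Y) := by
  have h1 : (U ⊓ blkS X) ⊔ (U ⊓ blkS Y) ≤ U ⊓ blkS (X ∪ Y) := by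
    apply sup_le
    · exact inf_le_inf_left _ (blkS_mono (Finset.subset_union_left))
    · exact inf_le_inf_left _ (blkS_mono (Finset.subset_union_right))
  have h2 : (U ⊓ blkS X) ⊓ (U ⊓ blkS Y) = U ⊓ blkS (X ∩ Y) := by
    have : blkS (b := b) (X ∩ Y) = blkS X ⊓ blkS Y := by
      unfold blkS
      have : (X ∩ Y) ×ˢ (Finset.univ : Finset (Fin b)) =
          (X ×ˢ Finset.univ) ∩ (Y ×ˢ Finset.univ) := by
        ext p; simp only [Finset.mem_product, Finset.mem_inter, Finset.mem_univ, and_true]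
      rw [this]
      ext v; simp only [Submodule.mem_inf, mem_coordSub, Finset.mem_inter]
      constructor
      · intro h; exact ⟨fun p hp => h p (fun hh => hp hh.1), fun p hp => h p (fun hh => hp hh.2)⟩
      · intro h p hp
        by_cases h1 : p ∈ X ×ˢ (Finset.univ : Finset (Fin b))
        · exact h.2 p (fun hy => hp ⟨h1, hy⟩)
        · exact h.1 p h1
    rw [this]
    ext v; simp only [Submodule.mem_inf]; tauto
  have := Submodule.finrank_sup_add_finrank_inf_eq (U ⊓ blkS X) (U ⊓ blkS Y)
  have hle := Submodule.finrank_mono h1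
  rw [h2] at this
  unfold kdim
  omega

lemma finrank_perp_inf_blkS (M : Submodule F2 ((ι × Fin b) → F2)) (X : Finset ι) :
    finrank F2 ↥(perp M ⊓ blkS X) + finrank F2 ↥M + Xᶜ.card * b
      = Fintype.card ι * b + kdim M Xᶜ := by
  have h1 : perp M ⊓ blkS X = perp (M ⊔ blkS Xᶜ) := by
    rw [blkS, perp_inf_coordSub, prod_compl]; rfl
  have h2 := finrank_perp_add (M ⊔ blkS (b := b) Xᶜ)
  have h3 := Submodule.finrank_sup_add_finrank_inf_eq M (blkS (b := b) Xᶜ)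
  rw [finrank_blkS] at h3
  have h4 : Fintype.card (ι × Fin b) = Fintype.card ι * b := by
    rw [Fintype.card_prod, Fintype.card_fin]
  rw [h1]
  unfold kdim
  omega

end Blocks
section Safe
variable {ι : Type*} [Fintype ι] [DecidableEq ι] {b : ℕ}

lemma isSafeSet_submodule_iff (N : Submodule F2 ((ι × Fin b) → F2)) :
    IsSafeSet (N : Set ((ι × Fin b) → F2)) ↔
      ∀ X : Finset ι, finrank F2 ↥(N ⊓ blkS X) ≤ X.card := by
  constructor
  · intro hs X
    by_contra hX
    push_neg at hX
    have hk : X.card + 1 ≤ finrank F2 ↥(N ⊓ blkS X) := hX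
    set k := X.card + 1 with hkdef
    let bs := Module.finBasis F2 ↥(N ⊓ blkS X)
    let w : Fin k → ((ι × Fin b) → F2) := fun m => (bs (Fin.castLE hk m) : (ι × Fin b) → F2)
    have hmem : ∀ m, w m ∈ Submodule.span F2 (N : Set ((ι × Fin b) → F2)) := by
      intro m; rw [Submodule.span_eq]; exact (bs (Fin.castLE hk m)).2.1
    have hli : LinearIndependent F2 w := by
      have h1 := (bs.linearIndependent.comp (Fin.castLE hk) (Fin.castLE_injective hk))
      exact h1.map' (N ⊓ blkS X).subtype (Submodule.ker_subtype _)
    have hcard := hs k w hmem hli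
    have hsub : {i : ι | ∃ m j, w m (i, j) ≠ 0} ⊆ (X : Set ι) := by
      rintro i ⟨m, j, hij⟩
      by_contra hiX
      exact hij ((mem_blkS.mp (bs (Fin.castLE hk m)).2.2) (i, j) (by simpa using hiX))
    have hn := Set.ncard_le_ncard hsub (X.finite_toSet)
    rw [Set.ncard_coe_finset] at hn
    omega
  · intro h k w hmem hli
    classical
    have hfin : {i : ι | ∃ m j, w m (i, j) ≠ 0}.Finite := Set.toFinite _
    set S := hfin.toFinset with hS
    have hcoe : (S : Set ι) = {i : ι | ∃ m j, w m (i, j) ≠ 0} := hfin.coe_toFinset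
    have hmem' : ∀ m, w m ∈ N ⊓ blkS S := by
      intro m
      refine ⟨by rw [← Submodule.span_eq N]; exact hmem m, mem_blkS.mpr ?_⟩
      intro p hp
      by_contra h0
      apply hp
      rw [← Finset.mem_coe, hcoe]
      exact ⟨m, p.2, by rwa [Prod.mk.eta]⟩
    let w' : Fin k → ↥(N ⊓ blkS S) := fun m => ⟨w m, hmem' m⟩
    have hli' : LinearIndependent F2 w' := by
      apply LinearIndependent.of_comp (N ⊓ blkS S).subtype
      exact hli
    have hcard' := hli'.fintype_card_le_finrank
    rw [Fintype.card_fin] at hcard'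
    have hX := h S
    rw [← hcoe, Set.ncard_coe_finset]
    omega

lemma isSafeSet_perp_iff (M : Submodule F2 ((ι × Fin b) → F2)) :
    IsSafeSet ((perp M : Submodule F2 ((ι × Fin b) → F2)) : Set ((ι × Fin b) → F2)) ↔
      ∀ X : Finset ι, phiZ M X ≤ phiZ M Finset.univ := by
  rw [isSafeSet_submodule_iff]
  have hmul : ∀ X : Finset ι, X.card * b + Xᶜ.card * b = Fintype.card ι * b := by
    intro X
    rw [← add_mul, Finset.card_add_card_compl]
  constructor
  · intro h X
    have hfr := finrank_perp_inf_blkS M Xᶜ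
    rw [compl_compl] at hfr
    have hle := h Xᶜ
    have hcard : X.card + Xᶜ.card = Fintype.card ι := Finset.card_add_card_compl X
    have hm := hmul X
    unfold phiZ
    rw [kdim_univ, Finset.card_univ]
    have hfr' : (finrank F2 ↥(perp M ⊓ blkS Xᶜ) : ℤ) + finrank F2 ↥M + X.card * b
        = Fintype.card ι * b + kdim M X := by exact_mod_cast congrArg (Nat.cast : ℕ → ℤ) hfr
    have hle' : (finrank F2 ↥(perp M ⊓ blkS Xᶜ) : ℤ) ≤ Xᶜ.card := by exact_mod_cast hle
    have hcard' : (X.card : ℤ) + Xᶜ.card = Fintype.card ι := by exact_mod_cast hcard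
    have hm' : (X.card : ℤ) * b + Xᶜ.card * b = Fintype.card ι * b := by exact_mod_cast hm
    push_cast
    linarith
  · intro h X
    have hfr := finrank_perp_inf_blkS M X
    have hph := h Xᶜ
    have hcard : X.card + Xᶜ.card = Fintype.card ι := Finset.card_add_card_compl X
    have hm := hmul X
    unfold phiZ at hph
    rw [kdim_univ, Finset.card_univ] at hph
    have hfr' : (finrank F2 ↥(perp M ⊓ blkS X) : ℤ) + finrank F2 ↥M + Xᶜ.card * b
        = Fintype.card ι * b + kdim M Xᶜ := by exact_mod_cast congrArg (Nat.cast : ℕ → ℤ) hfr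
    have hcard' : (X.card : ℤ) + Xᶜ.card = Fintype.card ι := by exact_mod_cast hcard
    have hm' : (X.card : ℤ) * b + Xᶜ.card * b = Fintype.card ι * b := by exact_mod_cast hm
    have : (finrank F2 ↥(perp M ⊓ blkS X) : ℤ) ≤ X.card := by
      push_cast at hph
      linarith
    exact_mod_cast this

end Safe
section Emb
variable {n b : ℕ} (T : Finset (Fin n))

def embL : (({i : Fin n // i ∉ T} × Fin b) → F2) →ₗ[F2] ((Fin n × Fin b) → F2) where
  toFun x := fun p => if h : p.1 ∈ T then 0 else x (⟨p.1, h⟩, p.2)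
  map_add' x y := by funext p; by_cases h : p.1 ∈ T <;> simp [h]
  map_smul' c x := by funext p; by_cases h : p.1 ∈ T <;> simp [h]

def resL : ((Fin n × Fin b) → F2) →ₗ[F2] (({i : Fin n // i ∉ T} × Fin b) → F2) where
  toFun := restrictOut T
  map_add' x y := rfl
  map_smul' c x := rfl

lemma embL_apply (x : ({i : Fin n // i ∉ T} × Fin b) → F2) (p : Fin n × Fin b) :
    embL T x p = if h : p.1 ∈ T then 0 else x (⟨p.1, h⟩, p.2) := rfl

lemma resL_embL (x : ({i : Fin n // i ∉ T} × Fin b) → F2) : resL T (embL T x) = x := by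
  funext p
  obtain ⟨⟨i, hi⟩, j⟩ := p
  simp [resL, embL, restrictOut, hi]
  show (if h : i ∈ T then (0:F2) else x (⟨i, h⟩, j)) = _
  rw [dif_neg hi]

lemma embL_injective : Function.Injective (embL (n := n) (b := b) T) :=
  Function.LeftInverse.injective (resL_embL T)

lemma embL_vanish (x : ({i : Fin n // i ∉ T} × Fin b) → F2) (p : Fin n × Fin b)
    (hp : p.1 ∈ T) : embL T x p = 0 := by
  rw [embL_apply, dif_pos hp]

lemma sum_blocks_eq (g : Fin n → F2) (hg : ∀ i ∈ T, g i = 0) :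
    ∑ i, g i = ∑ i : {i : Fin n // i ∉ T}, g i.1 := by
  rw [← Finset.sum_subtype (Tᶜ) (fun i => by simp) g]
  symm
  apply Finset.sum_subset (Finset.subset_univ _)
  intro i _ hi
  exact hg i (by simpa using hi)

lemma dot_embL (l : (Fin n × Fin b) → F2) (x : ({i : Fin n // i ∉ T} × Fin b) → F2) :
    dot l (embL T x) = dot (resL T l) x := by
  unfold dot
  rw [Fintype.sum_prod_type, Fintype.sum_prod_type]
  rw [sum_blocks_eq T (fun i => ∑ j, l (i, j) * embL T x (i, j))
    (fun i hi => by
      apply Finset.sum_eq_zero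
      intro j _
      rw [embL_vanish T x (i, j) hi, mul_zero])]
  apply Finset.sum_congr rfl
  intro i _
  apply Finset.sum_congr rfl
  intro j _
  rw [embL_apply, dif_neg i.2]
  rfl

lemma map_resL_perp (U : Submodule F2 ((Fin n × Fin b) → F2)) :
    Submodule.map (resL T) (perp U) = perp (Submodule.comap (embL T) U) := by
  have key : perp (Submodule.map (resL T) (perp U)) = Submodule.comap (embL T) U := by
    ext x
    simp only [mem_perp, Submodule.mem_comap]
    constructor
    · intro h
      have : embL T x ∈ perp (perp U) := by
        intro l hl
        rw [dot_comm, dot_embL, dot_comm]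
        exact h (resL T l) (Submodule.mem_map_of_mem hl)
      rwa [perp_perp] at this
    · intro h w hw
      rcases hw with ⟨l, hl, rfl⟩
      rw [dot_comm, ← dot_embL]
      exact hl (embL T x) h
  rw [← key, perp_perp]

lemma blkS_map_le_range {X' : Finset {i : Fin n // i ∉ T}} :
    blkS (b := b) (X'.map ⟨Subtype.val, Subtype.val_injective⟩)
      ≤ LinearMap.range (embL (n := n) (b := b) T) := by
  intro v hv
  refine ⟨resL T v, ?_⟩
  funext p
  rw [embL_apply]
  split_ifs with h
  · symm
    apply mem_blkS.mp hv
    intro hmem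
    rcases Finset.mem_map.mp hmem with ⟨a, _, ha⟩
    simp only [Function.Embedding.coeFn_mk] at ha
    exact a.2 (ha.symm ▸ h)
  · rfl

lemma comap_inf_blkS (U : Submodule F2 ((Fin n × Fin b) → F2))
    (X' : Finset {i : Fin n // i ∉ T}) :
    Submodule.comap (embL T) U ⊓ blkS X'
      = Submodule.comap (embL T) (U ⊓ blkS (X'.map ⟨Subtype.val, Subtype.val_injective⟩)) := by
  ext m
  simp only [Submodule.mem_inf, Submodule.mem_comap, mem_blkS]
  constructor
  · rintro ⟨hU, hX⟩
    refine ⟨hU, fun p hp => ?_⟩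
    rw [embL_apply]
    split_ifs with h
    · rfl
    · apply hX
      intro hmem
      exact hp (Finset.mem_map.mpr ⟨⟨p.1, h⟩, hmem, rfl⟩)
  · rintro ⟨hU, hX⟩
    refine ⟨hU, fun p hp => ?_⟩
    have := hX (p.1.1, p.2) (by
      intro hmem
      rcases Finset.mem_map.mp hmem with ⟨a, ha, ha2⟩
      apply hp
      simp only [Function.Embedding.coeFn_mk] at ha2
      have : a = p.1 := Subtype.ext ha2
      exact this ▸ ha)
    rw [embL_apply] at this
    rw [dif_neg p.1.2] at this
    simpa using this

lemma finrank_comap_embL (N : Submodule F2 ((Fin n × Fin b) → F2)) :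
    finrank F2 ↥(Submodule.comap (embL T) N)
      = finrank F2 ↥(LinearMap.range (embL T) ⊓ N) := by
  have e := Submodule.equivMapOfInjective (embL T) (embL_injective T) (Submodule.comap (embL T) N)
  have h := LinearEquiv.finrank_eq e
  rw [Submodule.map_comap_eq] at h
  exact h

lemma kdim_comap (U : Submodule F2 ((Fin n × Fin b) → F2))
    (X' : Finset {i : Fin n // i ∉ T}) :
    kdim (Submodule.comap (embL T) U) X'
      = kdim U (X'.map ⟨Subtype.val, Subtype.val_injective⟩) := by
  unfold kdim
  rw [comap_inf_blkS, finrank_comap_embL]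
  have h2 : LinearMap.range (embL (n := n) (b := b) T)
      ⊓ (U ⊓ blkS (X'.map ⟨Subtype.val, Subtype.val_injective⟩))
      = U ⊓ blkS (X'.map ⟨Subtype.val, Subtype.val_injective⟩) :=
    inf_eq_right.mpr (le_trans inf_le_right (blkS_map_le_range T))
  rw [h2]

lemma univ_map_val : (Finset.univ : Finset {i : Fin n // i ∉ T}).map
    ⟨Subtype.val, Subtype.val_injective⟩ = Tᶜ := by
  ext i
  simp only [Finset.mem_map, Finset.mem_univ, true_and, Finset.mem_compl,
    Function.Embedding.coeFn_mk]
  constructor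
  · rintro ⟨a, _, rfl⟩; exact a.2
  · intro h; exact ⟨⟨i, h⟩, rfl⟩

lemma annih_eq_perp (A : AffineSubspace F2 ((Fin n × Fin b) → F2)) :
    annih A = ((perp A.direction : Submodule F2 ((Fin n × Fin b) → F2)) :
      Set ((Fin n × Fin b) → F2)) := rfl

lemma restrictOut_image_annih (A : AffineSubspace F2 ((Fin n × Fin b) → F2)) :
    restrictOut T '' annih A
      = ((perp (Submodule.comap (embL T) A.direction) :
          Submodule F2 (({i : Fin n // i ∉ T} × Fin b) → F2)) : Set _) := by
  rw [annih_eq_perp, ← map_resL_perp]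
  rfl

end Emb
section Rado
variable {Q : Type*} [AddCommGroup Q] [Module F2 Q] [FiniteDimensional F2 Q]
variable {I : Type*} [Fintype I] [DecidableEq I] [DecidableEq Q]

lemma mem_span_biUnion {A : I → Finset Q} {S : Finset I} {i : I} (hi : i ∈ S) {q : Q}
    (hq : q ∈ A i) : q ∈ Submodule.span F2 (↑(S.biUnion A) : Set Q) :=
  Submodule.subset_span (Finset.mem_coe.mpr (Finset.mem_biUnion.mpr ⟨i, hi, hq⟩))

lemma linear_rado_aux : ∀ (N : ℕ) (A : I → Finset Q), (∑ i, (A i).card = N) →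
    (∀ S : Finset I, S.card ≤ finrank F2 (Submodule.span F2 (↑(S.biUnion A) : Set Q))) →
    ∃ x : I → Q, (∀ i, x i ∈ A i) ∧ LinearIndependent F2 x := by
  intro N
  induction N using Nat.strong_induction_on with
  | _ N ih =>
    intro A hsum hcond
    by_cases hall : ∀ i, (A i).card ≤ 1
    · have hone : ∀ i, ∃ a, A i = {a} := by
        intro i
        have h1 : 1 ≤ (A i).card := by
          by_contra h0
          push_neg at h0
          have hA : A i = ∅ := Finset.card_eq_zero.mp (by omega)
          have := hcond {i}
          rw [Finset.singleton_biUnion, hA] at this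
          simp at this
        exact Finset.card_eq_one.mp (le_antisymm (hall i) h1)
      choose a ha using hone
      refine ⟨a, fun i => by rw [ha i]; exact Finset.mem_singleton_self _, ?_⟩
      rw [linearIndependent_iff_card_le_finrank_span]
      have hrange : Set.range a = ↑(Finset.univ.biUnion A) := by
        ext q
        simp only [Set.mem_range, Finset.coe_biUnion, Finset.coe_univ, Set.mem_iUnion,
          Finset.mem_coe, Set.mem_univ, true_and]
        constructor
        · rintro ⟨i, rfl⟩; exact ⟨i, trivial, by rw [ha i]; exact Finset.mem_singleton_self _⟩
        · rintro ⟨i, _, hq⟩; exact ⟨i, by rw [ha i] at hq; exact (Finset.mem_singleton.mp hq).symm⟩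
      have := hcond Finset.univ
      rw [Finset.card_univ] at this
      unfold Set.finrank
      rw [hrange]
      exact this
    · push_neg at hall
      obtain ⟨i₀, hi₀⟩ := hall
      obtain ⟨x, hx, y, hy, hxy⟩ := Finset.one_lt_card.mp hi₀
      -- helper data for removing element z from A i₀
      have hupd : ∀ z ∈ A i₀, ∑ i, ((Function.update A i₀ ((A i₀).erase z)) i).card = N - 1 := by
        intro z hz
        have : (fun i => ((Function.update A i₀ ((A i₀).erase z)) i).card)
            = Function.update (fun i => (A i).card) i₀ ((A i₀).erase z).card := by
          funext i
          by_cases h : i = i₀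
          · subst h; simp
          · simp [Function.update_of_ne h]
        rw [this, Finset.sum_update_of_mem (Finset.mem_univ i₀)]
        rw [Finset.card_erase_of_mem hz]
        have h1 : 1 ≤ (A i₀).card := Finset.card_pos.mpr ⟨z, hz⟩
        have h2 : ∑ i ∈ Finset.univ \ {i₀}, (A i).card + (A i₀).card = ∑ i, (A i).card := by
          simpa using Finset.sum_sdiff (f := fun i => (A i).card) (Finset.subset_univ {i₀})
        omega
      have hNpos : 1 ≤ N := by
        have : 2 ≤ (A i₀).card := hi₀
        have : (A i₀).card ≤ ∑ i, (A i).card :=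
          Finset.single_le_sum (f := fun i => (A i).card) (fun i _ => Nat.zero_le _)
            (Finset.mem_univ i₀)
        omega
      -- if the condition survives removing z, we are done
      by_cases hcx : ∀ S : Finset I, S.card ≤ finrank F2
          (Submodule.span F2 (↑(S.biUnion (Function.update A i₀ ((A i₀).erase x))) : Set Q))
      · obtain ⟨v, hv, hli⟩ := ih (N - 1) (by omega) _ (hupd x hx) hcx
        refine ⟨v, fun i => ?_, hli⟩
        have := hv i
        by_cases h : i = i₀
        · rw [h] at this ⊢
          rw [Function.update_self] at this
          exact (A i₀).erase_subset _ this
        · rwa [Function.update_of_ne h] at this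
      by_cases hcy : ∀ S : Finset I, S.card ≤ finrank F2
          (Submodule.span F2 (↑(S.biUnion (Function.update A i₀ ((A i₀).erase y))) : Set Q))
      · obtain ⟨v, hv, hli⟩ := ih (N - 1) (by omega) _ (hupd y hy) hcy
        refine ⟨v, fun i => ?_, hli⟩
        have := hv i
        by_cases h : i = i₀
        · rw [h] at this ⊢
          rw [Function.update_self] at this
          exact (A i₀).erase_subset _ this
        · rwa [Function.update_of_ne h] at this
      -- both fail: derive a contradiction
      exfalso
      push_neg at hcx hcy
      obtain ⟨Sx, hSx⟩ := hcx
      obtain ⟨Sy, hSy⟩ := hcy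
      have hmemfix : ∀ (z : Q) (S : Finset I),
          finrank F2 (Submodule.span F2 (↑(S.biUnion (Function.update A i₀ ((A i₀).erase z))) : Set Q)) < S.card →
          i₀ ∈ S := by
        intro z S hS
        by_contra hi
        have : S.biUnion (Function.update A i₀ ((A i₀).erase z)) = S.biUnion A := by
          apply Finset.biUnion_congr rfl
          intro i hiS
          rw [Function.update_of_ne (fun h => hi (by rw [← h]; exact hiS))]
        rw [this] at hS
        exact absurd (hcond S) (by omega)
      have hix : i₀ ∈ Sx := hmemfix x Sx hSx
      have hiy : i₀ ∈ Sy := hmemfix y Sy hSy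
      set Ax := Function.update A i₀ ((A i₀).erase x) with hAx
      set Ay := Function.update A i₀ ((A i₀).erase y) with hAy
      set Ux := Submodule.span F2 (↑(Sx.biUnion Ax) : Set Q) with hUx
      set Uy := Submodule.span F2 (↑(Sy.biUnion Ay) : Set Q) with hUy
      set Sx' := Sx.erase i₀ with hSx'
      set Sy' := Sy.erase i₀ with hSy'
      have hcx' : finrank F2 ↥Ux ≤ Sx'.card := by
        rw [hSx', Finset.card_erase_of_mem hix]; omega
      have hcy' : finrank F2 ↥Uy ≤ Sy'.card := by
        rw [hSy', Finset.card_erase_of_mem hiy]; omega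
      have hAsubx : ∀ i ∈ Sx', ∀ q ∈ A i, q ∈ Ux := by
        intro i hi q hq
        have hne : i ≠ i₀ := Finset.ne_of_mem_erase hi
        exact mem_span_biUnion (Finset.mem_of_mem_erase hi)
          (by rw [hAx, Function.update_of_ne hne]; exact hq)
      have hAsuby : ∀ i ∈ Sy', ∀ q ∈ A i, q ∈ Uy := by
        intro i hi q hq
        have hne : i ≠ i₀ := Finset.ne_of_mem_erase hi
        exact mem_span_biUnion (Finset.mem_of_mem_erase hi)
          (by rw [hAy, Function.update_of_ne hne]; exact hq)
      have herasex : ∀ q ∈ (A i₀).erase x, q ∈ Ux := by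
        intro q hq
        exact mem_span_biUnion hix (by rw [hAx, Function.update_self]; exact hq)
      have herasey : ∀ q ∈ (A i₀).erase y, q ∈ Uy := by
        intro q hq
        exact mem_span_biUnion hiy (by rw [hAy, Function.update_self]; exact hq)
      have hsup : Submodule.span F2 (↑((insert i₀ (Sx' ∪ Sy')).biUnion A) : Set Q) ≤ Ux ⊔ Uy := by
        rw [Submodule.span_le]
        intro q hq
        rw [Finset.mem_coe, Finset.mem_biUnion] at hq
        obtain ⟨i, hiS, hqA⟩ := hq
        rcases Finset.mem_insert.mp hiS with h | h
        · subst h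
          by_cases hqx : q = x
          · subst hqx
            exact Submodule.mem_sup_right (herasey q (Finset.mem_erase.mpr ⟨hxy, hqA⟩))
          · exact Submodule.mem_sup_left (herasex q (Finset.mem_erase.mpr ⟨hqx, hqA⟩))
        · rcases Finset.mem_union.mp h with h' | h'
          · exact Submodule.mem_sup_left (hAsubx i h' q hqA)
          · exact Submodule.mem_sup_right (hAsuby i h' q hqA)
      have hinf : Submodule.span F2 (↑((Sx' ∩ Sy').biUnion A) : Set Q) ≤ Ux ⊓ Uy := by
        rw [Submodule.span_le]
        intro q hq
        rw [Finset.mem_coe, Finset.mem_biUnion] at hq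
        obtain ⟨i, hiS, hqA⟩ := hq
        exact ⟨hAsubx i (Finset.mem_of_mem_inter_left hiS) q hqA,
          hAsuby i (Finset.mem_of_mem_inter_right hiS) q hqA⟩
      have h1 : (insert i₀ (Sx' ∪ Sy')).card ≤ finrank F2 ↥(Ux ⊔ Uy) :=
        le_trans (hcond _) (Submodule.finrank_mono hsup)
      have h2 : (Sx' ∩ Sy').card ≤ finrank F2 ↥(Ux ⊓ Uy) :=
        le_trans (hcond _) (Submodule.finrank_mono hinf)
      have h3 : (insert i₀ (Sx' ∪ Sy')).card = (Sx' ∪ Sy').card + 1 := by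
        rw [Finset.card_insert_of_notMem]
        intro h
        rcases Finset.mem_union.mp h with h' | h'
        · exact Finset.notMem_erase i₀ Sx h'
        · exact Finset.notMem_erase i₀ Sy h'
      have h4 := Finset.card_union_add_card_inter Sx' Sy'
      have h5 := Submodule.finrank_sup_add_finrank_inf_eq Ux Uy
      omega

lemma linear_rado (A : I → Finset Q)
    (hcond : ∀ S : Finset I, S.card ≤ finrank F2 (Submodule.span F2 (↑(S.biUnion A) : Set Q))) :
    ∃ x : I → Q, (∀ i, x i ∈ A i) ∧ LinearIndependent F2 x :=
  linear_rado_aux _ A rfl hcond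

end Rado
section AclBounds

lemma stdv_eq_single {ι : Type*} [DecidableEq ι] {b : ℕ} (p : ι × Fin b) :
    stdv p = Pi.single p (1 : F2) := by
  funext q
  rw [stdv, Pi.single_apply]

lemma finrank_map_add_inf_ker {V V₂ : Type*} [AddCommGroup V] [Module F2 V] [AddCommGroup V₂]
    [Module F2 V₂] [FiniteDimensional F2 V] (f : V →ₗ[F2] V₂) (p : Submodule F2 V) :
    finrank F2 ↥(Submodule.map f p) + finrank F2 ↥(p ⊓ LinearMap.ker f) = finrank F2 ↥p := by
  have h := LinearMap.finrank_range_add_finrank_ker (f.domRestrict p)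
  rw [LinearMap.range_domRestrict, LinearMap.ker_domRestrict] at h
  have e2 := LinearEquiv.finrank_eq (Submodule.equivMapOfInjective p.subtype p.injective_subtype
    (Submodule.comap p.subtype (LinearMap.ker f)))
  rw [Submodule.map_comap_eq, Submodule.range_subtype] at e2
  rw [e2] at h
  exact h

lemma coordSub_eq_span {P : Type*} [Fintype P] [DecidableEq P] (s : Finset P) :
    coordSub s = Submodule.span F2
      ((s.image (fun p => Pi.single p (1 : F2)) : Finset (P → F2)) : Set (P → F2)) := by
  apply le_antisymm
  · intro v hv
    have hrepr : v = ∑ p ∈ s, v p • Pi.single p (1 : F2) := by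
      have h0 := pi_eq_sum_univ v
      have h1 : ∀ p : P, ((fun j => if p = j then (1 : F2) else 0) : P → F2)
          = Pi.single p (1 : F2) := by
        intro p; funext j; rw [Pi.single_apply]; exact if_congr eq_comm rfl rfl
      rw [show ∑ p ∈ s, v p • Pi.single p (1 : F2) = ∑ p, v p • Pi.single p (1 : F2) from
        Finset.sum_subset (Finset.subset_univ s) (fun p _ hp => by rw [hv p hp, zero_smul])]
      conv_lhs => rw [h0]
      exact Finset.sum_congr rfl fun p _ => by rw [h1 p]
    rw [hrepr]
    apply Submodule.sum_mem
    intro p hp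
    exact Submodule.smul_mem _ _ (Submodule.subset_span
      (Finset.mem_coe.mpr (Finset.mem_image_of_mem _ hp)))
  · rw [Submodule.span_le]
    intro q hq
    rw [Finset.coe_image, Set.mem_image] at hq
    obtain ⟨p, hp, rfl⟩ := hq
    exact single_mem_coordSub (Finset.mem_coe.mp hp)

lemma acceptable_phi_bound {ι : Type*} [Fintype ι] [DecidableEq ι] {b : ℕ}
    (W : Submodule F2 ((ι × Fin b) → F2)) {S : Finset ι} (hS : AcceptableFor W S)
    (X : Finset ι) : phiZ W X + S.card ≤ Fintype.card ι := by
  classical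
  obtain ⟨c, hc⟩ := hS
  set f : {s // s ∈ S ∩ X} → ((ι × Fin b) → F2) :=
    fun s => Pi.single ((s.1, c s.1) : ι × Fin b) (1 : F2) with hf
  have hinj : Function.Injective (fun s : {s // s ∈ S ∩ X} => ((s.1, c s.1) : ι × Fin b)) :=
    fun a b hab => Subtype.ext (congrArg Prod.fst hab)
  have hli : LinearIndependent F2 f := by
    have hb := (Pi.basisFun F2 (ι × Fin b)).linearIndependent
    have h2 := hb.comp _ hinj
    have : f = (Pi.basisFun F2 (ι × Fin b)) ∘ (fun s : {s // s ∈ S ∩ X} => (s.1, c s.1)) := by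
      funext s
      rw [hf, Function.comp_apply, Pi.basisFun_apply]
    rwa [this]
  set E := Submodule.span F2 (Set.range f) with hE
  have hfr : finrank F2 ↥E = (S ∩ X).card := by
    rw [hE, finrank_span_eq_card hli, Fintype.card_coe]
  have hEblk : E ≤ blkS X := by
    rw [hE, Submodule.span_le]
    rintro q ⟨s, rfl⟩
    apply mem_blkS.mpr
    intro p hp
    have hne : p ≠ (s.1, c s.1) := by
      intro h
      exact hp (h ▸ (Finset.mem_inter.mp s.2).2)
    rw [hf]
    simp [Pi.single_apply, hne]
  have hdisj : E ⊓ (W ⊓ blkS X) = ⊥ := by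
    rw [eq_bot_iff]
    rintro v hv
    rw [Submodule.mem_inf] at hv
    obtain ⟨hvE, hvW2⟩ := hv
    rw [Submodule.mem_inf] at hvW2
    obtain ⟨hvW, _⟩ := hvW2
    rw [Submodule.mem_bot]
    by_contra hv0
    rw [hE] at hvE
    rw [mem_span_range_iff_exists_fun] at hvE
    obtain ⟨a, ha⟩ := hvE
    set T₀ : Finset ι := (Finset.univ.filter (fun i : {s // s ∈ S ∩ X} => a i = 1)).image
      Subtype.val with hT₀
    have hvsum : v = ∑ s ∈ T₀, stdv (s, c s) := by
      rw [hT₀, Finset.sum_image (fun x _ y _ h => Subtype.ext h)]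
      rw [← ha]
      rw [← Finset.sum_filter_of_ne (p := fun i : {s // s ∈ S ∩ X} => a i = 1)
        (fun i _ hne => by
          by_contra h1
          have : a i = 0 := by
            have : ∀ r : F2, r = 0 ∨ r = 1 := by decide
            rcases this (a i) with h | h
            · exact h
            · exact absurd h h1
          rw [this, zero_smul] at hne
          exact hne rfl)]
      apply Finset.sum_congr rfl
      intro i hi
      rw [(Finset.mem_filter.mp hi).2, one_smul, stdv_eq_single, hf]
    have hT₀S : T₀ ⊆ S := by
      intro i hi
      rw [hT₀] at hi
      obtain ⟨s, _, rfl⟩ := Finset.mem_image.mp hi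
      exact (Finset.mem_inter.mp s.2).1
    have hT₀ne : T₀.Nonempty := by
      by_contra hne
      rw [Finset.not_nonempty_iff_eq_empty] at hne
      rw [hne, Finset.sum_empty] at hvsum
      exact hv0 hvsum
    exact hc T₀ hT₀S hT₀ne (hvsum ▸ hvW)
  have hsum := Submodule.finrank_sup_add_finrank_inf_eq E (W ⊓ blkS X)
  rw [hdisj, finrank_bot, add_zero] at hsum
  have hmono := Submodule.finrank_mono (sup_le hEblk (inf_le_right : W ⊓ blkS X ≤ blkS X))
  rw [finrank_blkS] at hmono
  have hXU := Finset.card_union_add_card_inter X S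
  have hcardU : (X ∪ S).card ≤ Fintype.card ι := by
    rw [← Finset.card_univ]
    exact Finset.card_le_card (Finset.subset_univ _)
  rw [Finset.inter_comm X S] at hXU
  unfold phiZ kdim
  have hsum' : (finrank F2 ↥(E ⊔ (W ⊓ blkS X)) : ℤ)
      = finrank F2 ↥E + finrank F2 ↥(W ⊓ blkS X) := by exact_mod_cast hsum
  have hfr' : (finrank F2 ↥E : ℤ) = (S ∩ X).card := by exact_mod_cast hfr
  have hmono' : (finrank F2 ↥(E ⊔ (W ⊓ blkS X)) : ℤ) ≤ X.card * b := by exact_mod_cast hmono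
  have hXU' : (X ∪ S).card + (S ∩ X).card = (X.card : ℤ) + S.card := by exact_mod_cast hXU
  have hcardU' : ((X ∪ S).card : ℤ) ≤ Fintype.card ι := by exact_mod_cast hcardU
  linarith

end AclBounds
section RadoApp

variable {ι : Type*} [Fintype ι] [DecidableEq ι] {b : ℕ}

private abbrev RQ (W : Submodule F2 ((ι × Fin b) → F2)) (d : ℕ) : Type _ :=
  ((((ι × Fin b) → F2) ⧸ W) × (Fin d → F2))

lemma exists_acceptable_of_phi_bound (hb : 0 < b)
    (W : Submodule F2 ((ι × Fin b) → F2)) (d : ℕ)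
    (hphi : ∀ X : Finset ι, (kdim W X : ℤ) + X.card ≤ X.card * b + d) :
    ∃ S : Finset ι, AcceptableFor W S ∧ Fintype.card ι ≤ S.card + d := by
  classical
  set L : ((ι × Fin b) → F2) →ₗ[F2] RQ W d :=
    (LinearMap.inl F2 ((((ι × Fin b) → F2) ⧸ W)) (Fin d → F2)).comp W.mkQ with hL
  set sec : Fin d → RQ W d := fun m => ((0, Pi.single m 1) : RQ W d) with hsec
  set A : ι → Finset (RQ W d) := fun i =>
    (Finset.univ.image (fun j : Fin b => L (stdv (i, j)))) ∪ (Finset.univ.image sec) with hA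
  have hkerL : LinearMap.ker L = W := by
    rw [hL, LinearMap.ker_comp, Submodule.ker_inl, Submodule.comap_bot, Submodule.ker_mkQ]
  have hsec_li : LinearIndependent F2 sec := by
    have h1 : LinearIndependent F2 (fun m : Fin d => Pi.single m (1 : F2)) := by
      have := (Pi.basisFun F2 (Fin d)).linearIndependent
      have he : (fun m : Fin d => Pi.single m (1 : F2)) = ⇑(Pi.basisFun F2 (Fin d)) := by
        funext m; rw [Pi.basisFun_apply]
      rwa [he]
    have h2 := h1.map' (LinearMap.inr F2 ((((ι × Fin b) → F2) ⧸ W)) (Fin d → F2))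
      Submodule.ker_inr
    have he : sec = (LinearMap.inr F2 ((((ι × Fin b) → F2) ⧸ W)) (Fin d → F2)) ∘
        (fun m : Fin d => Pi.single m (1 : F2)) := by
      funext m; rfl
    rwa [he]
  have hcond : ∀ S : Finset ι,
      S.card ≤ finrank F2 (Submodule.span F2 (↑(S.biUnion A) : Set (RQ W d))) := by
    intro S
    rcases S.eq_empty_or_nonempty with rfl | ⟨i₁, hi₁⟩
    · simp
    · set Fsp := Submodule.map L (blkS S) with hFsp
      set G := Submodule.span F2 (Set.range sec) with hG
      have hFsp_le : Fsp ≤ Submodule.span F2 (↑(S.biUnion A) : Set (RQ W d)) := by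
        rw [hFsp, blkS, coordSub_eq_span, Submodule.map_span, Submodule.span_le]
        rintro q hq
        rw [Set.mem_image] at hq
        obtain ⟨w, hw, rfl⟩ := hq
        rw [Finset.coe_image, Set.mem_image] at hw
        obtain ⟨p, hp, rfl⟩ := hw
        have hp1 : p.1 ∈ S := (Finset.mem_product.mp (Finset.mem_coe.mp hp)).1
        apply mem_span_biUnion hp1
        rw [hA]
        apply Finset.mem_union_left
        apply Finset.mem_image.mpr
        refine ⟨p.2, Finset.mem_univ _, ?_⟩
        rw [stdv_eq_single]
      have hG_le : G ≤ Submodule.span F2 (↑(S.biUnion A) : Set (RQ W d)) := by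
        rw [hG, Submodule.span_le]
        rintro q ⟨m, rfl⟩
        exact mem_span_biUnion hi₁
          (by rw [hA]; exact Finset.mem_union_right _ (Finset.mem_image_of_mem _ (Finset.mem_univ m)))
      have hdisj : Fsp ⊓ G = ⊥ := by
        rw [eq_bot_iff]
        intro q hq
        rw [Submodule.mem_inf] at hq
        obtain ⟨hq1, hq2⟩ := hq
        have h2 : q.2 = 0 := by
          rw [hFsp] at hq1
          obtain ⟨w, _, rfl⟩ := hq1
          rfl
        have h1 : q.1 = 0 := by
          have hGfst : G ≤ LinearMap.ker (LinearMap.fst F2 ((((ι × Fin b) → F2) ⧸ W)) (Fin d → F2)) := by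
            rw [hG, Submodule.span_le]
            rintro _ ⟨m, rfl⟩
            rw [SetLike.mem_coe, LinearMap.mem_ker]
            rfl
          exact hGfst hq2
        rw [Submodule.mem_bot]
        exact Prod.ext h1 h2
      have hfrG : finrank F2 ↥G = d := by
        rw [hG, finrank_span_eq_card hsec_li, Fintype.card_fin]
      have hfrF : finrank F2 ↥Fsp + kdim W S = S.card * b := by
        have h := finrank_map_add_inf_ker L (blkS S)
        rw [hkerL, finrank_blkS] at h
        rw [← h, hFsp]
        unfold kdim
        rw [show W ⊓ blkS S = blkS S ⊓ W from inf_comm _ _]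
      have hsum := Submodule.finrank_sup_add_finrank_inf_eq Fsp G
      rw [hdisj, finrank_bot, add_zero] at hsum
      have hmono := Submodule.finrank_mono (sup_le hFsp_le hG_le)
      have hx := hphi S
      have hfrF' : (finrank F2 ↥Fsp : ℤ) + kdim W S = S.card * b := by exact_mod_cast hfrF
      have hsum' : (finrank F2 ↥(Fsp ⊔ G) : ℤ) = finrank F2 ↥Fsp + finrank F2 ↥G := by
        exact_mod_cast hsum
      have hmono' : (finrank F2 ↥(Fsp ⊔ G) : ℤ)
          ≤ finrank F2 (Submodule.span F2 (↑(S.biUnion A) : Set (RQ W d))) := by exact_mod_cast hmono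
      have hfrG' : (finrank F2 ↥G : ℤ) = d := by exact_mod_cast hfrG
      have : (S.card : ℤ) ≤ finrank F2 (Submodule.span F2 (↑(S.biUnion A) : Set (RQ W d))) := by
        linarith
      exact_mod_cast this
  obtain ⟨x, hxA, hli⟩ := linear_rado A hcond
  set S : Finset ι := Finset.univ.filter (fun i => ∃ j : Fin b, x i = L (stdv (i, j))) with hS
  set c : ι → Fin b := fun i =>
    if h : ∃ j : Fin b, x i = L (stdv (i, j)) then h.choose else ⟨0, hb⟩ with hc
  have hcS : ∀ i ∈ S, x i = L (stdv (i, c i)) := by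
    intro i hi
    have h := (Finset.mem_filter.mp hi).2
    rw [hc]
    simp only [h, dif_pos]
    exact h.choose_spec
  refine ⟨S, ⟨c, ?_⟩, ?_⟩
  · intro T₀ hT₀S hT₀ne hW
    have hLsum : ∑ s ∈ T₀, x s = 0 := by
      have : ∑ s ∈ T₀, x s = L (∑ s ∈ T₀, stdv (s, c s)) := by
        rw [map_sum]
        exact Finset.sum_congr rfl fun s hs => hcS s (hT₀S hs)
      rw [this, ← LinearMap.mem_ker, hkerL]
      exact hW
    obtain ⟨s₀, hs₀⟩ := hT₀ne
    have hg : ∑ i, (if i ∈ T₀ then (1 : F2) else 0) • x i = 0 := by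
      have hsm : ∀ i, (if i ∈ T₀ then (1 : F2) else 0) • x i = if i ∈ T₀ then x i else 0 := by
        intro i; split_ifs <;> simp
      rw [Finset.sum_congr rfl (fun i _ => hsm i), Finset.sum_ite_mem, Finset.univ_inter]
      exact hLsum
    have := Fintype.linearIndependent_iff.mp hli (fun i => if i ∈ T₀ then (1 : F2) else 0) hg s₀
    rw [if_pos hs₀] at this
    exact one_ne_zero this
  · -- counting
    have hsecform : ∀ i, i ∉ S → ∃ m : Fin d, x i = sec m := by
      intro i hi
      have hx := hxA i
      rw [hA] at hx
      rcases Finset.mem_union.mp hx with h | h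
      · exfalso
        apply hi
        rw [hS, Finset.mem_filter]
        obtain ⟨j, _, hj⟩ := Finset.mem_image.mp h
        exact ⟨Finset.mem_univ i, j, hj.symm⟩
      · obtain ⟨m, _, hm⟩ := Finset.mem_image.mp h
        exact ⟨m, hm.symm⟩
    choose mfun hmfun using hsecform
    set xc : {i // i ∈ Sᶜ} → RQ W d := fun i => x i.1 with hxc
    have hxc_li : LinearIndependent F2 xc := hli.comp _ Subtype.val_injective
    have hker_inter : LinearMap.ker (LinearMap.fst F2 ((((ι × Fin b) → F2) ⧸ W)) (Fin d → F2)) ⊓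
        LinearMap.ker (LinearMap.snd F2 ((((ι × Fin b) → F2) ⧸ W)) (Fin d → F2)) = ⊥ := by
      rw [eq_bot_iff]
      intro q hq
      rw [Submodule.mem_inf, LinearMap.mem_ker, LinearMap.mem_ker] at hq
      rw [Submodule.mem_bot]
      exact Prod.ext hq.1 hq.2
    have hspan_le : Submodule.span F2 (Set.range xc)
        ≤ LinearMap.ker (LinearMap.fst F2 ((((ι × Fin b) → F2) ⧸ W)) (Fin d → F2)) := by
      rw [Submodule.span_le]
      rintro _ ⟨i, rfl⟩
      rw [SetLike.mem_coe, LinearMap.mem_ker]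
      show (LinearMap.fst F2 ((((ι × Fin b) → F2) ⧸ W)) (Fin d → F2)) (x i.1) = 0
      rw [hmfun i.1 (Finset.mem_compl.mp i.2)]
      rfl
    have hdisj2 : Disjoint (Submodule.span F2 (Set.range xc))
        (LinearMap.ker (LinearMap.snd F2 ((((ι × Fin b) → F2) ⧸ W)) (Fin d → F2))) := by
      rw [disjoint_iff]
      rw [eq_bot_iff, ← hker_inter]
      exact inf_le_inf_right _ hspan_le
    have hmap_li := hxc_li.map hdisj2
    have hcount := hmap_li.fintype_card_le_finrank
    rw [Fintype.card_coe] at hcount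
    have hfrpi : finrank F2 (Fin d → F2) = d := by
      rw [Module.finrank_pi, Fintype.card_fin]
    rw [hfrpi] at hcount
    have := Finset.card_add_card_compl S
    omega

end RadoApp
section Char
variable {n b : ℕ}

lemma phiZ_comap (T : Finset (Fin n)) (U : Submodule F2 ((Fin n × Fin b) → F2))
    (X' : Finset {i : Fin n // i ∉ T}) :
    phiZ (Submodule.comap (embL T) U) X' = phiZ U (X'.map ⟨Subtype.val, Subtype.val_injective⟩) := by
  unfold phiZ
  rw [kdim_comap, Finset.card_map]

lemma subtype_map_val (T : Finset (Fin n)) (X : Finset (Fin n)) (hX : X ⊆ Tᶜ) :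
    (X.subtype (fun i => i ∉ T)).map ⟨Subtype.val, Subtype.val_injective⟩ = X := by
  ext i
  simp only [Finset.mem_map, Finset.mem_subtype, Function.Embedding.coeFn_mk]
  constructor
  · rintro ⟨a, ha, rfl⟩; exact ha
  · intro hi
    exact ⟨⟨i, Finset.mem_compl.mp (hX hi)⟩, hi, rfl⟩

lemma isDeviolator_iff (A : AffineSubspace F2 ((Fin n × Fin b) → F2)) (T : Finset (Fin n)) :
    IsDeviolator A T ↔
      ∀ X : Finset (Fin n), X ⊆ Tᶜ → phiZ A.direction X ≤ phiZ A.direction Tᶜ := by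
  rw [IsDeviolator, restrictOut_image_annih, isSafeSet_perp_iff]
  constructor
  · intro h X hX
    have := h (X.subtype (fun i => i ∉ T))
    rw [phiZ_comap, phiZ_comap, subtype_map_val T X hX, univ_map_val] at this
    exact this
  · intro h X'
    have := h (X'.map ⟨Subtype.val, Subtype.val_injective⟩) (by
      intro i hi
      rcases Finset.mem_map.mp hi with ⟨a, _, rfl⟩
      exact Finset.mem_compl.mpr a.2)
    rw [phiZ_comap, phiZ_comap, univ_map_val]
    exact this

lemma phiZ_supermod (U : Submodule F2 ((Fin n × Fin b) → F2)) (X Y : Finset (Fin n)) :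
    phiZ U X + phiZ U Y ≤ phiZ U (X ∪ Y) + phiZ U (X ∩ Y) := by
  have h1 := kdim_supermod U X Y
  have h2 := Finset.card_union_add_card_inter X Y
  have h3 : (X ∪ Y).card * b + (X ∩ Y).card * b = X.card * b + Y.card * b := by
    rw [← add_mul, ← add_mul, h2]
  unfold phiZ
  have h1' : (kdim U X : ℤ) + kdim U Y ≤ kdim U (X ∪ Y) + kdim U (X ∩ Y) := by exact_mod_cast h1
  have h2' : ((X ∪ Y).card : ℤ) + (X ∩ Y).card = X.card + Y.card := by exact_mod_cast h2
  have h3' : ((X ∪ Y).card : ℤ) * b + (X ∩ Y).card * b = X.card * b + Y.card * b := by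
    exact_mod_cast h3
  linarith

lemma closure_global_max (A : AffineSubspace F2 ((Fin n × Fin b) → F2)) (T : Finset (Fin n))
    (hT : IsClosure A T) :
    ∀ Y : Finset (Fin n), phiZ A.direction Y ≤ phiZ A.direction Tᶜ := by
  set W := A.direction with hW
  have hdev := (isDeviolator_iff A T).mp hT.1
  obtain ⟨Ym, _, hYmax⟩ := Finset.exists_max_image (Finset.univ : Finset (Finset (Fin n)))
    (phiZ W) ⟨∅, Finset.mem_univ ∅⟩
  have hZ : phiZ W Ym ≤ phiZ W (Tᶜ ∪ Ym) := by
    have hsm := phiZ_supermod W Tᶜ Ym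
    have hint : phiZ W (Tᶜ ∩ Ym) ≤ phiZ W Tᶜ := hdev _ (Finset.inter_subset_left)
    linarith
  have hZdev : IsDeviolator A (T \ Ym) := by
    rw [isDeviolator_iff]
    intro X _
    have hcompl : (T \ Ym)ᶜ = Tᶜ ∪ Ym := by
      ext i
      simp only [Finset.mem_compl, Finset.mem_sdiff, Finset.mem_union]
      tauto
    rw [hcompl]
    calc phiZ W X ≤ phiZ W Ym := hYmax X (Finset.mem_univ X)
      _ ≤ phiZ W (Tᶜ ∪ Ym) := hZ
  have hmin := hT.2 _ hZdev
  have hsd := Finset.card_sdiff_add_card_inter T Ym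
  have hint0 : (T ∩ Ym).card = 0 := by omega
  have hYmTc : Ym ⊆ Tᶜ := by
    intro i hi
    rw [Finset.mem_compl]
    intro hiT
    have : i ∈ T ∩ Ym := Finset.mem_inter.mpr ⟨hiT, hi⟩
    rw [Finset.card_eq_zero.mp hint0] at this
    exact Finset.notMem_empty i this
  intro Y
  calc phiZ W Y ≤ phiZ W Ym := hYmax Y (Finset.mem_univ Y)
    _ ≤ phiZ W Tᶜ := hdev Ym hYmTc

lemma kdim_le_succ (W W' : Submodule F2 ((Fin n × Fin b) → F2)) (hle : W' ≤ W)
    (hfr : finrank F2 ↥W ≤ finrank F2 ↥W' + 1) (X : Finset (Fin n)) :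
    kdim W X ≤ kdim W' X + 1 := by
  have hUW' : (W ⊓ blkS X) ⊓ W' = W' ⊓ blkS X := by
    apply le_antisymm
    · intro v hv
      rw [Submodule.mem_inf] at hv ⊢
      rw [Submodule.mem_inf] at *
      exact ⟨hv.2, hv.1.2⟩
    · intro v hv
      rw [Submodule.mem_inf] at hv
      rw [Submodule.mem_inf, Submodule.mem_inf]
      exact ⟨⟨hle hv.1, hv.2⟩, hv.1⟩
  have h1 := Submodule.finrank_sup_add_finrank_inf_eq (W ⊓ blkS X) W'
  rw [hUW'] at h1
  have h2 : finrank F2 ↥((W ⊓ blkS X) ⊔ W') ≤ finrank F2 ↥W :=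
    Submodule.finrank_mono (sup_le (le_trans inf_le_left (le_refl W)) hle)
  unfold kdim
  omega

lemma drop_at_max {hb : 0 < b} (W W' : Submodule F2 ((Fin n × Fin b) → F2))
    (hle : W' ≤ W) (aclA : ℕ)
    (hWacc : ∀ S : Finset (Fin n), AcceptableFor W S → S.card ≤ aclA)
    (SB : Finset (Fin n)) (hSB : AcceptableFor W' SB) (hSBcard : SB.card = aclA + 1)
    (D : ℤ) (hglobal : ∀ Y : Finset (Fin n), phiZ W Y ≤ D)
    (X : Finset (Fin n)) (hX : phiZ W X = D) :
    ¬(W ⊓ blkS X ≤ W') := by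
  intro hcon
  have hinf_eq : W ⊓ blkS X = W' ⊓ blkS X := by
    apply le_antisymm
    · exact le_inf hcon inf_le_right
    · exact inf_le_inf_right _ hle
  have hphiW' : phiZ W' X = D := by
    rw [← hX]
    unfold phiZ kdim
    rw [hinf_eq]
  have hbound := acceptable_phi_bound W' hSB X
  rw [hphiW', hSBcard, Fintype.card_fin] at hbound
  have hD0 : 0 ≤ D := by
    have := hglobal ∅
    rw [show phiZ W ∅ = 0 from by unfold phiZ; rw [kdim_empty]; simp] at this
    linarith
  -- so aclA + 1 ≤ n - D, in particular aclA + 1 ≤ n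
  have haclAn : (aclA : ℤ) + 1 + D ≤ n := by push_cast at hbound; linarith
  set d0 : ℕ := n - (aclA + 1) with hd0
  have hd0' : (d0 : ℤ) = n - (aclA + 1) := by
    rw [hd0]
    have : aclA + 1 ≤ n := by
      have : (aclA : ℤ) + 1 ≤ n := by linarith
      exact_mod_cast this
    push_cast [Nat.cast_sub this]
    ring
  obtain ⟨S, hSacc, hScard⟩ := exists_acceptable_of_phi_bound hb W d0 (by
    intro Y
    have := hglobal Y
    unfold phiZ at this
    have hDd0 : D ≤ (d0 : ℤ) := by rw [hd0']; linarith
    linarith)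
  have := hWacc S hSacc
  rw [Fintype.card_fin] at hScard
  omega

end Char
lemma annih_eq_perp' {ι : Type*} [Fintype ι] [DecidableEq ι] {b : ℕ}
    (A : AffineSubspace F2 ((ι × Fin b) → F2)) :
    annih A = ((perp A.direction : Submodule F2 ((ι × Fin b) → F2)) :
      Set ((ι × Fin b) → F2)) := rfl

lemma F2_cases : ∀ r : F2, r = 0 ∨ r = 1 := by decide

/-- if `codim(B) = codim(A) + 1` and `âcl(B) = âcl(A) + 1`, then for any
extendable closure assignment `y` of `A`, the restrictions `A_y` and `B_y` are safe
affine subspaces with `codim(B_y) = codim(A_y) + 1` (Corollary `both_are_nice`). -/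
theorem stmt18 {n b : ℕ} (hn : 0 < n) (hb : 0 < b)
    (A B : AffineSubspace F2 ((Fin n × Fin b) → F2)) (hBA : B ≤ A)
    (hAne : (A : Set ((Fin n × Fin b) → F2)).Nonempty)
    (hBne : (B : Set ((Fin n × Fin b) → F2)).Nonempty)
    (hcodim : codim B = codim A + 1)
    (hacl : acl B = acl A + 1)
    (T : Finset (Fin n)) (hT : IsClosure A T)
    (y : ({i : Fin n // i ∈ T} × Fin b) → F2)
    (hy : ((A : Set ((Fin n × Fin b) → F2)) ∩ cube T y).Nonempty) :
    ((B : Set ((Fin n × Fin b) → F2)) ∩ cube T y).Nonempty ∧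
    ∃ (A' B' : AffineSubspace F2 (({i : Fin n // i ∉ T} × Fin b) → F2)),
      (A' : Set (({i : Fin n // i ∉ T} × Fin b) → F2))
          = {x | glue T y x ∈ A} ∧
      (B' : Set (({i : Fin n // i ∉ T} × Fin b) → F2))
          = {x | glue T y x ∈ B} ∧
      IsSafeAffine A' ∧ IsSafeAffine B' ∧
      codim B' = codim A' + 1 := by
  classical
  set W := A.direction with hWdef
  set W' := B.direction with hW'def
  have hW'W : W' ≤ W := AffineSubspace.direction_le hBA
  have hfinV : finrank F2 ((Fin n × Fin b) → F2) = n * b := by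
    rw [Module.finrank_pi, Fintype.card_prod, Fintype.card_fin, Fintype.card_fin]
  have hWnb : finrank F2 ↥W ≤ n * b := by
    rw [← hfinV]; exact Submodule.finrank_le W
  have hW'W_fr : finrank F2 ↥W' ≤ finrank F2 ↥W := Submodule.finrank_mono hW'W
  have hfWW' : finrank F2 ↥W = finrank F2 ↥W' + 1 := by
    unfold codim at hcodim
    rw [Fintype.card_fin] at hcodim
    rw [← hWdef, ← hW'def] at hcodim
    omega
  -- acl facts
  have hbddA : BddAbove {k | ∃ S : Finset (Fin n), S.card = k ∧ AcceptableFor W S} := by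
    refine ⟨n, fun k hk => ?_⟩
    obtain ⟨S, hS, _⟩ := hk
    have h1 : S.card ≤ n := by simpa using Finset.card_le_univ S
    omega
  have hbddB : BddAbove {k | ∃ S : Finset (Fin n), S.card = k ∧ AcceptableFor W' S} := by
    refine ⟨n, fun k hk => ?_⟩
    obtain ⟨S, hS, _⟩ := hk
    have h1 : S.card ≤ n := by simpa using Finset.card_le_univ S
    omega
  have haccA : ∀ S : Finset (Fin n), AcceptableFor W S → S.card ≤ acl A := by
    intro S hS
    rw [acl, ← hWdef]
    exact le_csSup hbddA ⟨S, rfl, hS⟩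
  have hne0B : (0 : ℕ) ∈ {k | ∃ S : Finset (Fin n), S.card = k ∧ AcceptableFor W' S} := by
    refine ⟨∅, Finset.card_empty, ⟨fun _ => ⟨0, hb⟩, fun T₀ hT₀ hT₀ne => ?_⟩⟩
    exact absurd (Finset.subset_empty.mp hT₀) (Finset.nonempty_iff_ne_empty.mp hT₀ne)
  have hmemB : acl B ∈ {k | ∃ S : Finset (Fin n), S.card = k ∧ AcceptableFor W' S} := by
    rw [acl, ← hW'def]
    exact Nat.sSup_mem ⟨0, hne0B⟩ hbddB
  obtain ⟨SB, hSBcard, hSBacc⟩ := hmemB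
  rw [hacl] at hSBcard
  -- closure facts
  have hglobal := closure_global_max A T hT
  rw [← hWdef] at hglobal
  set D : ℤ := phiZ W Tᶜ with hD
  have hdrop : ∀ X : Finset (Fin n), phiZ W X = D → ¬(W ⊓ blkS X ≤ W') :=
    fun X hX => drop_at_max (hb := hb) W W' hW'W (acl A) haccA SB hSBacc hSBcard D hglobal X hX
  obtain ⟨u, huW, huW'⟩ := SetLike.not_le_iff_exists.mp (hdrop Tᶜ rfl)
  have huWmem : u ∈ W := (Submodule.mem_inf.mp huW).1
  have hublk : u ∈ blkS Tᶜ := (Submodule.mem_inf.mp huW).2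
  have hu0 : u ≠ 0 := fun h => huW' (h ▸ W'.zero_mem)
  have hspan_u : W' ⊔ Submodule.span F2 {u} = W := by
    apply Submodule.eq_of_le_of_finrank_le
    · exact sup_le hW'W ((Submodule.span_singleton_le_iff_mem u W).mpr huWmem)
    · have hdisj : W' ⊓ Submodule.span F2 {u} = ⊥ := by
        rw [eq_bot_iff]
        intro v hv
        rw [Submodule.mem_inf] at hv
        obtain ⟨hv1, hv2⟩ := hv
        rw [Submodule.mem_span_singleton] at hv2
        obtain ⟨cc, rfl⟩ := hv2
        rcases F2_cases cc with h | h
        · rw [h, zero_smul]; exact Submodule.zero_mem ⊥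
        · rw [h, one_smul] at hv1; exact absurd hv1 huW'
      have h1 := Submodule.finrank_sup_add_finrank_inf_eq W' (Submodule.span F2 {u})
      rw [hdisj, finrank_bot, add_zero, finrank_span_singleton hu0] at h1
      omega
  -- part 1
  obtain ⟨a, haA, hacube⟩ := hy
  obtain ⟨b₀, hb₀⟩ := hBne
  have hvW : a - b₀ ∈ W := by
    have := AffineSubspace.vsub_mem_direction haA (hBA hb₀)
    rwa [vsub_eq_sub] at this
  rw [← hspan_u] at hvW
  obtain ⟨w', hw', s, hs, hsum⟩ := Submodule.mem_sup.mp hvW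
  rw [Submodule.mem_span_singleton] at hs
  obtain ⟨cc, rfl⟩ := hs
  have hpoint : b₀ + w' ∈ (B : Set ((Fin n × Fin b) → F2)) := by
    have := AffineSubspace.vadd_mem_of_mem_direction (hW'def ▸ hw') hb₀
    rwa [vadd_eq_add, add_comm] at this
  have hpt_eq : b₀ + w' = a - cc • u := by
    have hw'eq : w' = (a - b₀) - cc • u := by rw [← hsum]; abel
    rw [hw'eq]; abel
  have hpcube : b₀ + w' ∈ cube T y := by
    intro i hi j
    rw [hpt_eq]
    have hu0' : u (i, j) = 0 :=
      mem_blkS.mp hublk (i, j) (by simp [hi])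
    rw [Pi.sub_apply, Pi.smul_apply, hu0', smul_zero, sub_zero]
    exact hacube i hi j
  refine ⟨⟨b₀ + w', hpoint, hpcube⟩, ?_⟩
  -- part 2
  set γ : (({i : Fin n // i ∉ T} × Fin b) → F2) →ᵃ[F2] ((Fin n × Fin b) → F2) :=
    { toFun := glue T y
      linear := embL T
      map_vadd' := by
        intro p v
        funext q
        by_cases h : q.1 ∈ T
        · simp [glue, embL_apply, h, vadd_eq_add]
        · simp [glue, embL_apply, h, vadd_eq_add] } with hγ
  have hγ_app : ∀ x, γ x = glue T y x := fun _ => rfl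
  set A' := A.comap γ with hA'
  set B' := B.comap γ with hB'
  have hcoeA' : (A' : Set (({i : Fin n // i ∉ T} × Fin b) → F2)) = {x | glue T y x ∈ A} := by
    rw [hA', AffineSubspace.coe_comap]
    rfl
  have hcoeB' : (B' : Set (({i : Fin n // i ∉ T} × Fin b) → F2)) = {x | glue T y x ∈ B} := by
    rw [hB', AffineSubspace.coe_comap]
    rfl
  have hglue_res : ∀ z : (Fin n × Fin b) → F2, z ∈ cube T y →
      glue T y (restrictOut T z) = z := by
    intro z hz
    funext q
    by_cases h : q.1 ∈ T
    · simp only [glue, h, dif_pos]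
      exact (hz q.1 h q.2).symm
    · simp only [glue, h, dif_neg, not_false_iff]
      rfl
  have hx₀ : restrictOut T a ∈ A' := by
    rw [hA', AffineSubspace.mem_comap, hγ_app, hglue_res a hacube]
    exact haA
  have hx₁ : restrictOut T (b₀ + w') ∈ B' := by
    rw [hB', AffineSubspace.mem_comap, hγ_app, hglue_res _ hpcube]
    exact hpoint
  have hdir : ∀ (C : AffineSubspace F2 ((Fin n × Fin b) → F2))
      (x₁ : ({i : Fin n // i ∉ T} × Fin b) → F2), x₁ ∈ C.comap γ →
      (C.comap γ).direction = Submodule.comap (embL T) C.direction := by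
    intro C x₁ hx₁'
    apply le_antisymm
    · intro w hw
      rw [AffineSubspace.mem_direction_iff_eq_vsub ⟨x₁, hx₁'⟩] at hw
      obtain ⟨p1, hp1, p2, hp2, rfl⟩ := hw
      rw [Submodule.mem_comap]
      have hlin : embL T (p1 -ᵥ p2) = γ p1 -ᵥ γ p2 := γ.linearMap_vsub p1 p2
      rw [hlin]
      exact AffineSubspace.vsub_mem_direction ((AffineSubspace.mem_comap).mp hp1)
        ((AffineSubspace.mem_comap).mp hp2)
    · intro m hm
      rw [Submodule.mem_comap] at hm
      have h1 : m +ᵥ x₁ ∈ C.comap γ := by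
        rw [AffineSubspace.mem_comap, AffineMap.map_vadd]
        exact AffineSubspace.vadd_mem_of_mem_direction hm ((AffineSubspace.mem_comap).mp hx₁')
      have h2 := AffineSubspace.vsub_mem_direction h1 hx₁'
      rwa [vadd_vsub] at h2
  have hdirA' : A'.direction = Submodule.comap (embL T) W := by
    rw [hA', hWdef]
    exact hdir A _ (by rw [← hA']; exact hx₀)
  have hdirB' : B'.direction = Submodule.comap (embL T) W' := by
    rw [hB', hW'def]
    exact hdir B _ (by rw [← hB']; exact hx₁)
  -- safety of A'
  have hsafeA' : IsSafeAffine A' := by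
    show IsSafeSet (annih A')
    rw [annih_eq_perp', hdirA', hWdef, ← restrictOut_image_annih]
    exact hT.1
  -- deviolator for B
  have hkdrop : ∀ X : Finset (Fin n), phiZ W X = D → kdim W X = kdim W' X + 1 := by
    intro X hX
    have h1 := kdim_le_succ W W' hW'W (le_of_eq hfWW') X
    have h2 : kdim W' X < kdim W X := by
      have hlt : W' ⊓ blkS X < W ⊓ blkS X := by
        apply lt_of_le_of_ne (inf_le_inf_right _ hW'W)
        intro heq
        exact hdrop X hX (by rw [← heq]; exact inf_le_left)
      exact Submodule.finrank_lt_finrank_of_lt hlt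
    omega
  have hphirel : ∀ X : Finset (Fin n), phiZ W X = D → phiZ W' X = phiZ W X - 1 := by
    intro X hX
    have h := hkdrop X hX
    have h' : (kdim W X : ℤ) = kdim W' X + 1 := by exact_mod_cast h
    unfold phiZ
    linarith
  have hphile : ∀ X : Finset (Fin n), phiZ W' X ≤ phiZ W X := by
    intro X
    have h := kdim_mono_left hW'W X
    have h' : (kdim W' X : ℤ) ≤ kdim W X := by exact_mod_cast h
    unfold phiZ
    linarith
  have hdevB : IsDeviolator B T := by
    rw [isDeviolator_iff]
    rw [← hW'def]
    intro X _
    rw [hphirel Tᶜ rfl]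
    by_cases hmax : phiZ W X = D
    · rw [hphirel X hmax, hmax, hD]
    · have h1 : phiZ W X ≤ D - 1 := by
        have h2 := hglobal X
        omega
      calc phiZ W' X ≤ phiZ W X := hphile X
        _ ≤ D - 1 := h1
        _ = phiZ W Tᶜ - 1 := by rw [hD]
  have hsafeB' : IsSafeAffine B' := by
    show IsSafeSet (annih B')
    rw [annih_eq_perp', hdirB', hW'def, ← restrictOut_image_annih]
    exact hdevB
  -- codimension
  have hres_u : embL T (resL T u) = u := by
    funext q
    rw [embL_apply]
    split_ifs with h
    · exact (mem_blkS.mp hublk q (by simp [h])).symm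
    · rfl
  set M := Submodule.comap (embL T) W with hM
  set M' := Submodule.comap (embL T) W' with hM'
  have hMM' : M' ≤ M := Submodule.comap_mono hW'W
  have huM : resL T u ∈ M := by rw [hM, Submodule.mem_comap, hres_u]; exact huWmem
  have huM' : resL T u ∉ M' := by rw [hM', Submodule.mem_comap, hres_u]; exact huW'
  have hu0' : resL T u ≠ 0 := fun h => huM' (h ▸ M'.zero_mem)
  have hMsup : M = M' ⊔ Submodule.span F2 {resL T u} := by
    apply le_antisymm
    · intro m hm
      rw [hM, Submodule.mem_comap, ← hspan_u] at hm
      obtain ⟨w'', hw'', s2, hs2, hsum2⟩ := Submodule.mem_sup.mp hm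
      rw [Submodule.mem_span_singleton] at hs2
      obtain ⟨cc2, rfl⟩ := hs2
      have hmem1 : m - cc2 • resL T u ∈ M' := by
        rw [hM', Submodule.mem_comap, map_sub, map_smul, hres_u]
        rw [show embL T m - cc2 • u = w'' from by rw [← hsum2]; abel]
        exact hw''
      have hmm : m = (m - cc2 • resL T u) + cc2 • resL T u := by abel
      rw [hmm]
      exact Submodule.add_mem _ (Submodule.mem_sup_left hmem1)
        (Submodule.mem_sup_right (Submodule.smul_mem _ _ (Submodule.mem_span_singleton_self _)))
    · apply sup_le hMM'
      rw [Submodule.span_singleton_le_iff_mem]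
      exact huM
  have hdisjM : M' ⊓ Submodule.span F2 {resL T u} = ⊥ := by
    rw [eq_bot_iff]
    intro v hv
    rw [Submodule.mem_inf] at hv
    obtain ⟨hv1, hv2⟩ := hv
    rw [Submodule.mem_span_singleton] at hv2
    obtain ⟨cc, rfl⟩ := hv2
    rcases F2_cases cc with h | h
    · rw [h, zero_smul]; exact Submodule.zero_mem ⊥
    · rw [h, one_smul] at hv1; exact absurd hv1 huM'
  have hfrM : finrank F2 ↥M = finrank F2 ↥M' + 1 := by
    have h1 := Submodule.finrank_sup_add_finrank_inf_eq M' (Submodule.span F2 {resL T u})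
    rw [hdisjM, finrank_bot, add_zero, finrank_span_singleton hu0'] at h1
    rw [hMsup]
    omega
  have hMle : finrank F2 ↥M ≤ Fintype.card {i : Fin n // i ∉ T} * b := by
    have h1 := Submodule.finrank_le M
    have h2 : finrank F2 ((({i : Fin n // i ∉ T}) × Fin b) → F2)
        = Fintype.card {i : Fin n // i ∉ T} * b := by
      rw [Module.finrank_pi, Fintype.card_prod, Fintype.card_fin]
    omega
  have hcodim2 : codim B' = codim A' + 1 := by
    unfold codim
    rw [hdirA', hdirB']
    set nb' := Fintype.card {i : Fin n // i ∉ T} * b with hnb'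
    omega
  exact ⟨A', B', hcoeA', hcoeB', hsafeA', hsafeB', hcodim2⟩
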